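/- Let ν : [u,v] → ℝ (as a function of the second variable v') be continuous with ν(v') < 0, ∂_{v'} ν ≤ 0, ν ≥ −K, and let φ with |φ(v')| ≤ ΛΨ for all v'. Suppose h : [u,v] → ℝ satisfies h(u) = h₀ with |h₀| ≤ Ψ and h'(v') = (∂_{v'}ν)(v')·φ(v'). Then |h(v)| ≤ Ψ + ΛΨ·(−ν(v) + ν(u)) ≤ Ψ + ΛΨK ≤ (1 + ΛK)Ψ. -/

import Mathlib

open Set MeasureTheory

/-- Uniform bound on `∂_u(rφ)`: integrating `h' = (∂_v ν)·φ` from the axis with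
`|h(u)| ≤ Ψ`, `∂_v ν ≤ 0`, `−K ≤ ν < 0` and `|φ| ≤ ΛΨ` gives
`|h(v)| ≤ (1 + ΛK)Ψ`. -/
theorem stmt_17 (u v K Λ Ψ h₀ : ℝ) (huv : u ≤ v)
    (hK : 0 ≤ K) (hΛ : 0 ≤ Λ) (hΨ : 0 ≤ Ψ)
    (ν ν' φ h : ℝ → ℝ)
    (hνc : ContinuousOn ν (Icc u v))
    (hνd : ∀ x ∈ Icc u v, HasDerivAt ν (ν' x) x)
    (hνneg : ∀ x ∈ Icc u v, ν x < 0)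
    (hν'le : ∀ x ∈ Icc u v, ν' x ≤ 0)
    (hνK : ∀ x ∈ Icc u v, -K ≤ ν x)
    (hφ : ∀ x ∈ Icc u v, |φ x| ≤ Λ * Ψ)
    (hh0 : h u = h₀) (hh₀ : |h₀| ≤ Ψ)
    (hhd : ∀ x ∈ Icc u v, HasDerivAt h (ν' x * φ x) x) :
    |h v| ≤ Ψ + Λ * Ψ * (-(ν v) + ν u) ∧
    Ψ + Λ * Ψ * (-(ν v) + ν u) ≤ Ψ + Λ * Ψ * K ∧
    Ψ + Λ * Ψ * K ≤ (1 + Λ * K) * Ψ := by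
  have hu : u ∈ Icc u v := ⟨le_refl u, huv⟩
  have hv : v ∈ Icc u v := ⟨huv, le_refl v⟩
  have hconv : Convex ℝ (Icc u v) := convex_Icc u v
  have hhc : ContinuousOn h (Icc u v) := fun x hx => (hhd x hx).continuousAt.continuousWithinAt
  have hint : interior (Icc u v) = Ioo u v := interior_Icc
  -- g = h + ΛΨ ν is antitone
  have hgd : ∀ x ∈ Icc u v, HasDerivAt (fun y => h y + Λ * Ψ * ν y)
      (ν' x * φ x + Λ * Ψ * ν' x) x :=
    fun x hx => (hhd x hx).add ((hνd x hx).const_mul _)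
  have hg : AntitoneOn (fun y => h y + Λ * Ψ * ν y) (Icc u v) := by
    apply antitoneOn_of_deriv_nonpos hconv (hhc.add (continuousOn_const.mul hνc))
    · intro x hx
      rw [hint] at hx
      exact (hgd x (Ioo_subset_Icc_self hx)).differentiableAt.differentiableWithinAt
    · intro x hx
      rw [hint] at hx
      have hx' := Ioo_subset_Icc_self hx
      rw [show deriv (h + (fun x => Λ * Ψ) * ν) x = _ from (hgd x hx').deriv]
      have h1 : ν' x * φ x ≤ ν' x * (-(Λ * Ψ)) := by
        apply mul_le_mul_of_nonpos_left _ (hν'le x hx')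
        have := (abs_le.1 (hφ x hx')).1
        linarith
      nlinarith [hν'le x hx']
  -- f = h - ΛΨ ν is monotone
  have hfd : ∀ x ∈ Icc u v, HasDerivAt (fun y => h y - Λ * Ψ * ν y)
      (ν' x * φ x - Λ * Ψ * ν' x) x :=
    fun x hx => (hhd x hx).sub ((hνd x hx).const_mul _)
  have hf : MonotoneOn (fun y => h y - Λ * Ψ * ν y) (Icc u v) := by
    apply monotoneOn_of_deriv_nonneg hconv (hhc.sub (continuousOn_const.mul hνc))
    · intro x hx
      rw [hint] at hx
      exact (hfd x (Ioo_subset_Icc_self hx)).differentiableAt.differentiableWithinAt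
    · intro x hx
      rw [hint] at hx
      have hx' := Ioo_subset_Icc_self hx
      rw [show deriv (h - (fun x => Λ * Ψ) * ν) x = _ from (hfd x hx').deriv]
      have h1 : ν' x * (Λ * Ψ) ≤ ν' x * φ x := by
        apply mul_le_mul_of_nonpos_left _ (hν'le x hx')
        exact (abs_le.1 (hφ x hx')).2
      nlinarith [hν'le x hx']
  have hg' := hg hu hv huv
  have hf' := hf hu hv huv
  simp only at hg' hf'
  have hhu : |h u| ≤ Ψ := hh0 ▸ hh₀
  have habs := abs_le.1 hhu
  refine ⟨abs_le.2 ⟨by linarith, by linarith⟩, ?_, by ring_nf; exact le_refl _⟩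
  have h1 := (hνneg u hu).le
  have h2 := hνK v hv
  nlinarith [mul_nonneg hΛ hΨ]
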